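/- Let n ≥ 1, let V and B₁, B₂ be real n×n matrices with B_k = b_k α_kᵀ of rank one (entries (B_k)_{jl} = (b_k)_j (α_k)_l) for k = 1,2, let s₁, s₂ : ℝ → ℝ be continuous, and let i : ℝ → ℝ^n (a row vector) be differentiable with i'(t) = i(t)·(s₁(t)·B₁ + s₂(t)·B₂ − V) for all t. Define ĩ_k(t) = i(t)·b_k and kernels a_{jk}(u) = α_j·exp(−u·V)·b_k for j,k ∈ {1,2}. Then for all t ≥ 0 and k ∈ {1,2}: ĩ_k(t) = i(0)·exp(−t·V)·b_k + ∫_0^t [ s₁(τ)·ĩ₁(τ)·a_{1k}(t−τ) + s₂(τ)·ĩ₂(τ)·a_{2k}(t−τ) ] dτ. -/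

import Mathlib

open Matrix MeasureTheory

section AuxInst

attribute [local instance] Matrix.linftyOpSemiNormedRing Matrix.linftyOpNormedRing
  Matrix.linftyOpNormedAlgebra

private lemma expEntryDeriv {n : ℕ} (V : Matrix (Fin n) (Fin n) ℝ) (t τ₀ : ℝ) (j l : Fin n) :
    HasDerivAt (fun τ : ℝ => NormedSpace.exp ((τ - t) • V) j l)
      ((V * NormedSpace.exp ((τ₀ - t) • V)) j l) τ₀ := by
  have h1 : HasDerivAt (fun τ : ℝ => τ - t) 1 τ₀ := (hasDerivAt_id τ₀).sub_const t
  have h2 := hasDerivAt_exp_smul_const' (𝕂 := ℝ) V (τ₀ - t)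
  have h3 : HasDerivAt (fun τ : ℝ => NormedSpace.exp ((τ - t) • V))
      (V * NormedSpace.exp ((τ₀ - t) • V)) τ₀ := by
    have := h2.scomp τ₀ h1
    rw [one_smul] at this
    exact this
  let L : Matrix (Fin n) (Fin n) ℝ →L[ℝ] ℝ := LinearMap.toContinuousLinearMap
      ((LinearMap.proj l).comp (LinearMap.proj (R := ℝ) (φ := fun _ : Fin n => Fin n → ℝ) j))
  exact L.hasFDerivAt.comp_hasDerivAt τ₀ h3

end AuxInst

private lemma key {n : ℕ} (V : Matrix (Fin n) (Fin n) ℝ)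
    (b₁ b₂ α₁ α₂ : Fin n → ℝ)
    (B₁ B₂ : Matrix (Fin n) (Fin n) ℝ)
    (hB₁ : ∀ j l, B₁ j l = b₁ j * α₁ l) (hB₂ : ∀ j l, B₂ j l = b₂ j * α₂ l)
    (s₁ s₂ : ℝ → ℝ) (hs₁ : Continuous s₁) (hs₂ : Continuous s₂)
    (i : ℝ → Fin n → ℝ)
    (hi : ∀ t : ℝ, HasDerivAt i ((i t) ᵥ* (s₁ t • B₁ + s₂ t • B₂ - V)) t)
    (c : Fin n → ℝ) (t : ℝ) :
    i t ⬝ᵥ c = ((i 0) ᵥ* NormedSpace.exp ((-t) • V)) ⬝ᵥ c +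
      ∫ τ in (0:ℝ)..t,
        (s₁ τ * (i τ ⬝ᵥ b₁) * (α₁ ⬝ᵥ (NormedSpace.exp ((τ - t) • V) *ᵥ c)) +
         s₂ τ * (i τ ⬝ᵥ b₂) * (α₂ ⬝ᵥ (NormedSpace.exp ((τ - t) • V) *ᵥ c))) := by
  set E : ℝ → Matrix (Fin n) (Fin n) ℝ := fun τ => NormedSpace.exp ((τ - t) • V) with hEdef
  -- entrywise derivatives of E
  have hEentry : ∀ (τ₀ : ℝ) (j l : Fin n),
      HasDerivAt (fun τ => E τ j l) ((V * E τ₀) j l) τ₀ := fun τ₀ j l =>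
    expEntryDeriv V t τ₀ j l
  -- entrywise derivatives of i
  have hi' : ∀ (τ₀ : ℝ) (j : Fin n),
      HasDerivAt (fun τ => i τ j) ((i τ₀ ᵥ* (s₁ τ₀ • B₁ + s₂ τ₀ • B₂ - V)) j) τ₀ :=
    fun τ₀ j => hasDerivAt_pi.1 (hi τ₀) j
  -- derivative of components of E τ *ᵥ c
  have hw : ∀ (τ₀ : ℝ) (j : Fin n),
      HasDerivAt (fun τ => (E τ *ᵥ c) j) (((V * E τ₀) *ᵥ c) j) τ₀ := by
    intro τ₀ j
    simp only [mulVec, dotProduct]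
    exact HasDerivAt.fun_sum fun l _ => (hEentry τ₀ j l).mul_const (c l)
  -- rank-one action
  have hB₁v : ∀ w : Fin n → ℝ, B₁ *ᵥ w = (α₁ ⬝ᵥ w) • b₁ := by
    intro w; funext j
    simp [mulVec, dotProduct, hB₁, Finset.mul_sum, mul_assoc, mul_comm, mul_left_comm]
  have hB₂v : ∀ w : Fin n → ℝ, B₂ *ᵥ w = (α₂ ⬝ᵥ w) • b₂ := by
    intro w; funext j
    simp [mulVec, dotProduct, hB₂, Finset.mul_sum, mul_assoc, mul_comm, mul_left_comm]
  -- derivative of g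
  have hg : ∀ τ₀ : ℝ, HasDerivAt (fun τ => i τ ⬝ᵥ (E τ *ᵥ c))
      (s₁ τ₀ * (i τ₀ ⬝ᵥ b₁) * (α₁ ⬝ᵥ (E τ₀ *ᵥ c)) +
       s₂ τ₀ * (i τ₀ ⬝ᵥ b₂) * (α₂ ⬝ᵥ (E τ₀ *ᵥ c))) τ₀ := by
    intro τ₀
    have h := HasDerivAt.fun_sum (fun j (_ : j ∈ (Finset.univ : Finset (Fin n))) =>
      ((hi' τ₀ j).mul (hw τ₀ j)))
    have h2 : HasDerivAt (fun τ => i τ ⬝ᵥ (E τ *ᵥ c))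
        ((i τ₀ ᵥ* (s₁ τ₀ • B₁ + s₂ τ₀ • B₂ - V)) ⬝ᵥ (E τ₀ *ᵥ c) +
          i τ₀ ⬝ᵥ ((V * E τ₀) *ᵥ c)) τ₀ := by
      refine h.congr_deriv ?_
      rw [Finset.sum_add_distrib]; rfl
    convert h2 using 1
    rw [← Matrix.dotProduct_mulVec, ← Matrix.mulVec_mulVec, Matrix.sub_mulVec,
      Matrix.add_mulVec, Matrix.smul_mulVec, Matrix.smul_mulVec,
      hB₁v, hB₂v, dotProduct_sub, dotProduct_add]
    simp [dotProduct_smul, smul_eq_mul]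
    ring
  -- continuity of the integrand
  have hcontiE : ∀ j l : Fin n, Continuous fun τ => E τ j l := fun j l =>
    continuous_iff_continuousAt.2 fun τ₀ => (hEentry τ₀ j l).continuousAt
  have hconti : ∀ j : Fin n, Continuous fun τ => i τ j := fun j =>
    continuous_iff_continuousAt.2 fun τ₀ => (hi' τ₀ j).continuousAt
  have hcontw : ∀ (v : Fin n → ℝ), Continuous fun τ => v ⬝ᵥ (E τ *ᵥ c) := by
    intro v
    simp only [mulVec, dotProduct]
    exact continuous_finset_sum _ fun j _ => continuous_const.mul
      (continuous_finset_sum _ fun l _ => (hcontiE j l).mul continuous_const)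
  have hcontib : ∀ (v : Fin n → ℝ), Continuous fun τ => i τ ⬝ᵥ v := by
    intro v
    simp only [dotProduct]
    exact continuous_finset_sum _ fun j _ => (hconti j).mul continuous_const
  have hcont : Continuous fun τ =>
      (s₁ τ * (i τ ⬝ᵥ b₁) * (α₁ ⬝ᵥ (E τ *ᵥ c)) +
       s₂ τ * (i τ ⬝ᵥ b₂) * (α₂ ⬝ᵥ (E τ *ᵥ c))) :=
    (((hs₁.mul (hcontib b₁)).mul (hcontw α₁)).add
      ((hs₂.mul (hcontib b₂)).mul (hcontw α₂)))
  have heq := intervalIntegral.integral_eq_sub_of_hasDerivAt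
    (f := fun τ => i τ ⬝ᵥ (E τ *ᵥ c)) (fun τ _ => hg τ) (hcont.intervalIntegrable 0 t)
  have hEt : E t = 1 := by simp [hEdef, sub_self, NormedSpace.exp_zero]
  have hE0 : E 0 = NormedSpace.exp ((-t) • V) := by simp [hEdef]
  rw [heq]
  simp only [hEt, hE0, Matrix.one_mulVec, Matrix.dotProduct_mulVec]
  ring

/-- Coupled renewal system (ksys) for a SIR-PH-FA model with two susceptible
classes and rank-one new-infections matrices `B_k = b_k α_kᵀ`: the total forces
of infection `ĩ_k(t) = i(t)·b_k` satisfy a system of two renewal integral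
equations with matrix-exponential kernels `a_{jk}(u) = α_j·exp(−uV)·b_k`. -/
theorem stmt8 (n : ℕ) (hn : 1 ≤ n) (V : Matrix (Fin n) (Fin n) ℝ)
    (b₁ b₂ α₁ α₂ : Fin n → ℝ)
    (B₁ B₂ : Matrix (Fin n) (Fin n) ℝ)
    (hB₁ : ∀ j l, B₁ j l = b₁ j * α₁ l) (hB₂ : ∀ j l, B₂ j l = b₂ j * α₂ l)
    (s₁ s₂ : ℝ → ℝ) (hs₁ : Continuous s₁) (hs₂ : Continuous s₂)
    (i : ℝ → Fin n → ℝ)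
    (hi : ∀ t : ℝ, HasDerivAt i ((i t) ᵥ* (s₁ t • B₁ + s₂ t • B₂ - V)) t)
    (itil₁ itil₂ : ℝ → ℝ)
    (hitil₁ : ∀ t, itil₁ t = i t ⬝ᵥ b₁) (hitil₂ : ∀ t, itil₂ t = i t ⬝ᵥ b₂)
    (a₁₁ a₁₂ a₂₁ a₂₂ : ℝ → ℝ)
    (ha₁₁ : ∀ u : ℝ, a₁₁ u = α₁ ⬝ᵥ (NormedSpace.exp ((-u) • V) *ᵥ b₁))
    (ha₁₂ : ∀ u : ℝ, a₁₂ u = α₁ ⬝ᵥ (NormedSpace.exp ((-u) • V) *ᵥ b₂))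
    (ha₂₁ : ∀ u : ℝ, a₂₁ u = α₂ ⬝ᵥ (NormedSpace.exp ((-u) • V) *ᵥ b₁))
    (ha₂₂ : ∀ u : ℝ, a₂₂ u = α₂ ⬝ᵥ (NormedSpace.exp ((-u) • V) *ᵥ b₂)) :
    ∀ t : ℝ, 0 ≤ t →
      (itil₁ t = ((i 0) ᵥ* NormedSpace.exp ((-t) • V)) ⬝ᵥ b₁ +
        ∫ τ in (0:ℝ)..t,
          (s₁ τ * itil₁ τ * a₁₁ (t - τ) + s₂ τ * itil₂ τ * a₂₁ (t - τ))) ∧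
      (itil₂ t = ((i 0) ᵥ* NormedSpace.exp ((-t) • V)) ⬝ᵥ b₂ +
        ∫ τ in (0:ℝ)..t,
          (s₁ τ * itil₁ τ * a₁₂ (t - τ) + s₂ τ * itil₂ τ * a₂₂ (t - τ))) := by
  intro t ht
  constructor
  · simp only [hitil₁, hitil₂, ha₁₁, ha₂₁, neg_sub]
    exact key V b₁ b₂ α₁ α₂ B₁ B₂ hB₁ hB₂ s₁ s₂ hs₁ hs₂ i hi b₁ t
  · simp only [hitil₁, hitil₂, ha₁₂, ha₂₂, neg_sub]
    exact key V b₁ b₂ α₁ α₂ B₁ B₂ hB₁ hB₂ s₁ s₂ hs₁ hs₂ i hi b₂ t
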